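/- arXiv:math/0406226 — 2 statements merged into one kernel-verified Lean document; each statement's English description precedes it below -/
import Mathlib

section
/- Let X be a finite index set, let v ∈ X, and let X \ {v} = S ⊔ T be a partition. Let A be a symmetric real matrix indexed by X with A v v = 1 and with A s t = 0 for every s ∈ S and t ∈ T. Assume det A_S ≠ 0 and det A_T ≠ 0, where A_S and A_T denote the principal submatrices on S and on T. Then det A / (det A_S · det A_T) = det A_{S ∪ {v}} / det A_S + det A_{T ∪ {v}} / det A_T − 1. -/
open Matrix Real Finset

noncomputable section

/-- The principal submatrix of `A` with rows and columns indexed by `S`. -/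
def subm {n : Type*} (A : Matrix n n ℝ) (S : Finset n) : Matrix S S ℝ :=
  A.submatrix (fun i => (i : n)) (fun i => (i : n))

/-- The row of `A` at `v` restricted to columns in `S`. -/
def rowv {X : Type*} (A : Matrix X X ℝ) (v : X) (S : Finset X) : Matrix Unit S ℝ :=
  Matrix.of fun _ j => A v (j : X)

/-- The column of `A` at `v` restricted to rows in `S`. -/
def colv {X : Type*} (A : Matrix X X ℝ) (v : X) (S : Finset X) : Matrix S Unit ℝ :=
  Matrix.of fun i _ => A (i : X) v

/-- The Schur-complement scalar. -/
def sc {X : Type*} [DecidableEq X] (A : Matrix X X ℝ) (v : X) (S : Finset X) : ℝ :=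
  (rowv A v S * (subm A S)⁻¹ * colv A v S) () ()

lemma det_insert {X : Type*} [DecidableEq X] (A : Matrix X X ℝ) (v : X) (S : Finset X)
    (hvS : v ∉ S) (hS : (subm A S).det ≠ 0) :
    (subm A (insert v S)).det = (subm A S).det * (A v v - sc A v S) := by
  classical
  have hf : Function.Bijective
      (Sum.elim (fun s : S => (⟨(s : X), Finset.mem_insert_of_mem s.2⟩ : (insert v S : Finset X)))
        (fun _ : Unit => (⟨v, Finset.mem_insert_self v S⟩ : (insert v S : Finset X)))) := by
    constructor
    · rintro (s | u) (t | w) h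
      · simp only [Sum.elim_inl, Subtype.mk.injEq] at h
        exact congrArg Sum.inl (Subtype.ext h)
      · simp only [Sum.elim_inl, Sum.elim_inr, Subtype.mk.injEq] at h
        exact absurd (h ▸ s.2) hvS
      · simp only [Sum.elim_inl, Sum.elim_inr, Subtype.mk.injEq] at h
        exact absurd (h ▸ t.2) hvS
      · rfl
    · rintro ⟨x, hx⟩
      rcases Finset.mem_insert.mp hx with h | h
      · exact ⟨Sum.inr (), by simp [h]⟩
      · exact ⟨Sum.inl ⟨x, h⟩, rfl⟩
  let e := Equiv.ofBijective _ hf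
  have key : (subm A (insert v S)).submatrix e e =
      Matrix.fromBlocks (subm A S) (colv A v S) (rowv A v S)
        (Matrix.of fun _ _ : Unit => A v v) := by
    ext i j
    cases i <;> cases j <;> rfl
  haveI : Invertible (subm A S) := (subm A S).invertibleOfIsUnitDet hS.isUnit
  rw [← Matrix.det_submatrix_equiv_self e, key, Matrix.det_fromBlocks₁₁]
  congr 1
  rw [Matrix.det_unique]
  simp [sc, Matrix.invOf_eq_nonsing_inv]

lemma det_big {X : Type*} [Fintype X] [DecidableEq X]
    (v : X) (S T : Finset X)
    (hvS : v ∉ S) (hvT : v ∉ T) (hST : Disjoint S T)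
    (hcover : insert v (S ∪ T) = Finset.univ)
    (A : Matrix X X ℝ) (hsymm : A.IsSymm)
    (hzero : ∀ s ∈ S, ∀ t ∈ T, A s t = 0)
    (hS : (subm A S).det ≠ 0) (hT : (subm A T).det ≠ 0) :
    A.det = (subm A S).det * (subm A T).det * (A v v - sc A v S - sc A v T) := by
  classical
  have hf : Function.Bijective
      (Sum.elim (Sum.elim (fun s : S => (s : X)) (fun t : T => (t : X)))
        (fun _ : Unit => v)) := by
    constructor
    · rintro ((s | t) | u) ((s' | t') | u') h <;>
        simp only [Sum.elim_inl, Sum.elim_inr] at h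
      · exact congrArg (Sum.inl ∘ Sum.inl) (Subtype.ext h)
      · exact absurd (h ▸ s.2) (Finset.disjoint_right.mp hST t'.2)
      · exact absurd (h ▸ s.2) hvS
      · exact absurd (h.symm ▸ s'.2) (Finset.disjoint_right.mp hST t.2)
      · exact congrArg (Sum.inl ∘ Sum.inr) (Subtype.ext h)
      · exact absurd (h ▸ t.2) hvT
      · exact absurd (h ▸ s'.2) hvS
      · exact absurd (h ▸ t'.2) hvT
      · rfl
    · intro x
      have hx : x ∈ insert v (S ∪ T) := hcover ▸ Finset.mem_univ x
      rcases Finset.mem_insert.mp hx with h | h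
      · exact ⟨Sum.inr (), h.symm⟩
      · rcases Finset.mem_union.mp h with h | h
        · exact ⟨Sum.inl (Sum.inl ⟨x, h⟩), rfl⟩
        · exact ⟨Sum.inl (Sum.inr ⟨x, h⟩), rfl⟩
  let e := Equiv.ofBijective _ hf
  have hts : ∀ t ∈ T, ∀ s ∈ S, A t s = 0 := by
    intro t ht s hs
    rw [hsymm.apply s t]
    exact hzero s hs t ht
  have key : A.submatrix e e =
      Matrix.fromBlocks (Matrix.fromBlocks (subm A S) 0 0 (subm A T))
        (Matrix.fromRows (colv A v S) (colv A v T))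
        (Matrix.fromCols (rowv A v S) (rowv A v T))
        (Matrix.of fun _ _ : Unit => A v v) := by
    ext i j
    rcases i with (s | t) | u <;> rcases j with (s' | t') | u'
    · rfl
    · exact hzero s s.2 t' t'.2
    · rfl
    · exact hts t t.2 s' s'.2
    · rfl
    · rfl
    · rfl
    · rfl
    · rfl
  haveI iS : Invertible (subm A S) := (subm A S).invertibleOfIsUnitDet hS.isUnit
  haveI iT : Invertible (subm A T) := (subm A T).invertibleOfIsUnitDet hT.isUnit
  haveI iM : Invertible (Matrix.fromBlocks (subm A S) 0 0 (subm A T)) :=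
    Matrix.fromBlocksZero₂₁Invertible (subm A S) 0 (subm A T)
  rw [← Matrix.det_submatrix_equiv_self e, key, Matrix.det_fromBlocks₁₁,
    Matrix.det_fromBlocks_zero₂₁]
  have hinv : ⅟ (Matrix.fromBlocks (subm A S) 0 0 (subm A T)) =
      Matrix.fromBlocks (⅟ (subm A S)) 0 0 (⅟ (subm A T)) := by
    rw [Matrix.invOf_fromBlocks_zero₂₁_eq]
    simp
  have hschur : ((Matrix.of fun _ _ : Unit => A v v) -
        Matrix.fromCols (rowv A v S) (rowv A v T) *
          ⅟ (Matrix.fromBlocks (subm A S) 0 0 (subm A T)) *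
          Matrix.fromRows (colv A v S) (colv A v T)).det =
      A v v - sc A v S - sc A v T := by
    rw [hinv, Matrix.fromCols_mul_fromBlocks]
    simp only [Matrix.mul_zero, Matrix.zero_mul, add_zero, zero_add]
    rw [Matrix.fromCols_mul_fromRows, Matrix.det_unique]
    simp only [Matrix.sub_apply, Matrix.add_apply, Matrix.of_apply]
    rw [Matrix.invOf_eq_nonsing_inv, Matrix.invOf_eq_nonsing_inv]
    simp only [sc, Matrix.add_mul, Matrix.mul_assoc]
    ring
  rw [hschur]

/-- Vinberg's summation formula for local determinants: if the diagram of `A` is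
the union of two subdiagrams on `S ∪ {v}` and `T ∪ {v}` having the single vertex
`v` in common and otherwise not joined, then
`det(A, v) = det(A_{S∪{v}}, v) + det(A_{T∪{v}}, v) − 1`. -/
theorem stmt_14 {X : Type*} [Fintype X] [DecidableEq X]
    (v : X) (S T : Finset X)
    (hvS : v ∉ S) (hvT : v ∉ T) (hST : Disjoint S T)
    (hcover : insert v (S ∪ T) = Finset.univ)
    (A : Matrix X X ℝ) (hsymm : A.IsSymm) (hvv : A v v = 1)
    (hzero : ∀ s ∈ S, ∀ t ∈ T, A s t = 0)
    (hS : (subm A S).det ≠ 0) (hT : (subm A T).det ≠ 0) :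
    A.det / ((subm A S).det * (subm A T).det) =
      (subm A (insert v S)).det / (subm A S).det +
        (subm A (insert v T)).det / (subm A T).det - 1 := by
  rw [det_big v S T hvS hvT hST hcover A hsymm hzero hS hT,
    det_insert A v S hvS hS, det_insert A v T hvT hT, hvv]
  field_simp
  ring

end
end

section
/- Define D(p,q,r) = 1 − (cos²(π/p) + cos²(π/q) + 2·cos(π/p)·cos(π/q)·cos(π/r)) / sin²(π/r) for integers p, q, r ≥ 2. Then: (1) if p ≤ p', q ≤ q', r ≤ r' are integers ≥ 2 with 1/p + 1/q + 1/r < 1, then |D(p,q,r)| ≤ |D(p',q',r')|; and (2) for fixed integers p, q ≥ 2 with 1/p + 1/q < 1, the quantity |D(p,q,r)| tends to infinity as the integer r tends to infinity. -/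
open Real

noncomputable section

/-- The local determinant `D(p,q,r)` of the order-3 Lannér diagram `L_{p,q,r}`
on the vertex not belonging to the edge of weight `cos (π/r)`. -/
noncomputable def D (p q r : ℕ) : ℝ :=
  1 - (Real.cos (Real.pi / p) ^ 2 + Real.cos (Real.pi / q) ^ 2 +
        2 * Real.cos (Real.pi / p) * Real.cos (Real.pi / q) * Real.cos (Real.pi / r)) /
      Real.sin (Real.pi / r) ^ 2

-- basic facts about cos(π/n)
lemma pidiv_pos {n : ℕ} (hn : 2 ≤ n) : 0 < π / n :=
  div_pos Real.pi_pos (by exact_mod_cast Nat.lt_of_lt_of_le Nat.zero_lt_two hn)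

lemma pidiv_le {n : ℕ} (hn : 2 ≤ n) : π / n ≤ π / 2 := by
  apply div_le_div_of_nonneg_left Real.pi_pos.le (by norm_num)
  exact_mod_cast hn

lemma cosn_nonneg {n : ℕ} (hn : 2 ≤ n) : 0 ≤ Real.cos (π / n) :=
  Real.cos_nonneg_of_mem_Icc ⟨by linarith [pidiv_pos hn, Real.pi_pos], pidiv_le hn⟩

lemma cosn_lt_one {n : ℕ} (hn : 2 ≤ n) : Real.cos (π / n) < 1 := by
  have := pidiv_pos hn
  calc Real.cos (π / n) < Real.cos 0 := by
        apply Real.cos_lt_cos_of_nonneg_of_le_pi le_rfl ?_ this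
        linarith [pidiv_le hn, Real.pi_pos]
    _ = 1 := Real.cos_zero

lemma cosn_mono {m n : ℕ} (hm : 2 ≤ m) (h : m ≤ n) : Real.cos (π / m) ≤ Real.cos (π / n) := by
  have hn : 2 ≤ n := hm.trans h
  apply Real.cos_le_cos_of_nonneg_of_le_pi (pidiv_pos hn).le
  · linarith [pidiv_le hm, Real.pi_pos]
  · apply div_le_div_of_nonneg_left Real.pi_pos.le
    · exact_mod_cast Nat.lt_of_lt_of_le Nat.zero_lt_two hm
    · exact_mod_cast h

-- monotonicity of g
lemma g_mono {a b c a' b' c' : ℝ} (ha0 : 0 ≤ a) (hb0 : 0 ≤ b) (hc0 : 0 ≤ c)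
    (ha : a ≤ a') (hb : b ≤ b') (hc : c ≤ c') (hc'1 : c' < 1) :
    (a^2+b^2+c^2+2*a*b*c-1)/(1-c^2) ≤ (a'^2+b'^2+c'^2+2*a'*b'*c'-1)/(1-c'^2) := by
  have hc1 : c < 1 := lt_of_le_of_lt hc hc'1
  have h1 : 0 < 1 - c^2 := by nlinarith
  have h2 : 0 < 1 - c'^2 := by nlinarith
  have ha'0 : 0 ≤ a' := ha0.trans ha
  have hb'0 : 0 ≤ b' := hb0.trans hb
  have hc'0 : 0 ≤ c' := hc0.trans hc
  have step1 : (a^2+b^2+c^2+2*a*b*c-1)/(1-c^2) ≤ (a'^2+b'^2+c^2+2*a'*b'*c-1)/(1-c^2) := by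
    apply div_le_div_of_nonneg_right ?_ h1.le
    nlinarith [mul_nonneg (sub_nonneg.mpr ha) hc0, mul_nonneg (sub_nonneg.mpr hb) hc0,
      mul_nonneg (mul_nonneg (sub_nonneg.mpr ha) hb0) hc0,
      mul_nonneg (mul_nonneg (sub_nonneg.mpr hb) ha'0) hc0]
  have step2 : (a'^2+b'^2+c^2+2*a'*b'*c-1)/(1-c^2) ≤ (a'^2+b'^2+c'^2+2*a'*b'*c'-1)/(1-c'^2) := by
    rw [div_le_div_iff₀ h1 h2]
    have hcc : 0 ≤ c' - c := sub_nonneg.mpr hc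
    have h3 : 0 ≤ (c' - c) * (c' + c) * (a'^2 + b'^2) :=
      mul_nonneg (mul_nonneg hcc (by linarith)) (by positivity)
    have h4 : 0 ≤ a' * b' * ((c' - c) * (1 + c*c')) :=
      mul_nonneg (mul_nonneg ha'0 hb'0) (mul_nonneg hcc (by nlinarith))
    nlinarith [h3, h4]
  linarith

-- f positivity
lemma f_pos {A B C : ℝ} (hA0 : 0 < A) (hA : A ≤ π/2) (hB0 : 0 < B) (hB : B ≤ π/2)
    (hC0 : 0 < C) (hC : C ≤ π/2) (hsum : A + B + C < π) :
    0 < Real.cos A^2 + Real.cos B^2 + Real.cos C^2 +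
        2*Real.cos A*Real.cos B*Real.cos C - 1 := by
  have key : Real.cos A^2 + Real.cos B^2 + Real.cos C^2 +
      2*Real.cos A*Real.cos B*Real.cos C - 1
      = (Real.cos C + Real.cos (A+B)) * (Real.cos C + Real.cos (A-B)) := by
    rw [Real.cos_add, Real.cos_sub]
    have e1 := Real.sin_sq_add_cos_sq A
    have e2 := Real.sin_sq_add_cos_sq B
    nlinarith [e1, e2, sq_nonneg (Real.sin A), sq_nonneg (Real.sin B)]
  rw [key]
  have h1 : 0 < Real.cos C + Real.cos (A+B) := by
    have : Real.cos (π - (A+B)) < Real.cos C := by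
      apply Real.cos_lt_cos_of_nonneg_of_le_pi hC0.le
      · linarith
      · linarith
    rw [Real.cos_pi_sub] at this
    linarith
  have h2 : 0 < Real.cos C + Real.cos (A-B) := by
    have hC' : 0 ≤ Real.cos C := Real.cos_nonneg_of_mem_Icc ⟨by linarith, hC⟩
    have : 0 < Real.cos (A-B) := Real.cos_pos_of_mem_Ioo ⟨by linarith, by linarith⟩
    linarith
  exact mul_pos h1 h2

lemma abs_D {p q r : ℕ} (hp : 2 ≤ p) (hq : 2 ≤ q) (hr : 2 ≤ r) :
    |D p q r| = |Real.cos (π/p)^2 + Real.cos (π/q)^2 + Real.cos (π/r)^2 +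
      2*Real.cos (π/p)*Real.cos (π/q)*Real.cos (π/r) - 1| / (1 - Real.cos (π/r)^2) := by
  have hc := cosn_lt_one hr
  have hc0 := cosn_nonneg hr
  have hpos : 0 < 1 - Real.cos (π/r)^2 := by nlinarith
  have hs : Real.sin (π/r)^2 = 1 - Real.cos (π/r)^2 := Real.sin_sq (π/r)
  have hD : D p q r = -(Real.cos (π/p)^2 + Real.cos (π/q)^2 + Real.cos (π/r)^2 +
      2*Real.cos (π/p)*Real.cos (π/q)*Real.cos (π/r) - 1) / (1 - Real.cos (π/r)^2) := by
    unfold D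
    rw [hs]
    field_simp
    ring
  rw [hD, abs_div, abs_neg, abs_of_pos hpos]

theorem stmt_17 :
    (∀ p q r p' q' r' : ℕ, 2 ≤ p → 2 ≤ q → 2 ≤ r →
      p ≤ p' → q ≤ q' → r ≤ r' →
      (1 : ℝ) / p + 1 / q + 1 / r < 1 →
      |D p q r| ≤ |D p' q' r'|) ∧
    (∀ p q : ℕ, 2 ≤ p → 2 ≤ q → (1 : ℝ) / p + 1 / q < 1 →
      Filter.Tendsto (fun r : ℕ => |D p q r|) Filter.atTop Filter.atTop) := by
  constructor
  · intro p q r p' q' r' hp hq hr hpp hqq hrr hL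
    have hp' : 2 ≤ p' := hp.trans hpp
    have hq' : 2 ≤ q' := hq.trans hqq
    have hr' : 2 ≤ r' := hr.trans hrr
    rw [abs_D hp hq hr, abs_D hp' hq' hr']
    have hsum : π/p + π/q + π/r < π := by
      have h := mul_lt_mul_of_pos_left hL Real.pi_pos
      have e : π * ((1:ℝ)/p + 1/q + 1/r) = π/p + π/q + π/r := by ring
      rw [mul_one, e] at h
      exact h
    have hf : 0 < Real.cos (π/p)^2 + Real.cos (π/q)^2 + Real.cos (π/r)^2 +
        2*Real.cos (π/p)*Real.cos (π/q)*Real.cos (π/r) - 1 :=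
      f_pos (pidiv_pos hp) (pidiv_le hp) (pidiv_pos hq) (pidiv_le hq)
        (pidiv_pos hr) (pidiv_le hr) hsum
    rw [abs_of_pos hf]
    have hg := g_mono (cosn_nonneg hp) (cosn_nonneg hq) (cosn_nonneg hr)
      (cosn_mono hp hpp) (cosn_mono hq hqq) (cosn_mono hr hrr) (cosn_lt_one hr')
    refine hg.trans ?_
    have hc' := cosn_lt_one hr'
    have hc'0 := cosn_nonneg hr'
    have hpos' : 0 < 1 - Real.cos (π/r')^2 := by nlinarith
    exact div_le_div_of_nonneg_right (le_abs_self _) hpos'.le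
  · intro p q hp hq hL
    set a := Real.cos (π/p) with ha_def
    set b := Real.cos (π/q) with hb_def
    have ha0 : 0 ≤ a := cosn_nonneg hp
    have hb0 : 0 ≤ b := cosn_nonneg hq
    -- a + b > 0
    have hab : 0 < a + b := by
      rcases le_or_gt 3 p with h3 | h3
      · have : Real.cos (π/3) ≤ a := cosn_mono (by norm_num) h3
        norm_num [Real.cos_pi_div_three] at this
        linarith
      · interval_cases p
        have hq3 : 3 ≤ q := by
          by_contra h
          push_neg at h
          interval_cases q <;> norm_num at hL
        have : Real.cos (π/3) ≤ b := cosn_mono (by norm_num) hq3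
        norm_num [Real.cos_pi_div_three] at this
        linarith
    -- cos (π/r) → 1
    have h_c : Filter.Tendsto (fun r : ℕ => Real.cos (π/r)) Filter.atTop (nhds 1) := by
      have h0 : Filter.Tendsto (fun r : ℕ => π/(r:ℝ)) Filter.atTop (nhds 0) :=
        tendsto_const_div_atTop_nhds_zero_nat π
      have := (Real.continuous_cos.tendsto 0).comp h0
      simpa [Function.comp_def] using this
    have hnum : Filter.Tendsto
        (fun r : ℕ => a^2 + b^2 + Real.cos (π/r)^2 + 2*a*b*Real.cos (π/r) - 1)
        Filter.atTop (nhds ((a+b)^2)) := by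
      have : Filter.Tendsto
          (fun r : ℕ => a^2 + b^2 + Real.cos (π/r)^2 + 2*a*b*Real.cos (π/r) - 1)
          Filter.atTop (nhds (a^2 + b^2 + 1^2 + 2*a*b*1 - 1)) := by
        exact (((tendsto_const_nhds.add (h_c.pow 2)).add
          (tendsto_const_nhds.mul h_c)).sub tendsto_const_nhds)
      convert this using 2
      ring
    have hden : Filter.Tendsto (fun r : ℕ => 1 - Real.cos (π/r)^2) Filter.atTop
        (nhdsWithin 0 (Set.Ioi 0)) := by
      apply tendsto_nhdsWithin_of_tendsto_nhds_of_eventually_within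
      · have : Filter.Tendsto (fun r : ℕ => 1 - Real.cos (π/r)^2) Filter.atTop
            (nhds (1 - 1^2)) := tendsto_const_nhds.sub (h_c.pow 2)
        simpa using this
      · filter_upwards [Filter.eventually_ge_atTop 2] with r hr
        have h1 := cosn_lt_one hr
        have h2 := cosn_nonneg hr
        have : 0 < 1 - Real.cos (π/r)^2 := by nlinarith
        exact this
    have hinv : Filter.Tendsto (fun r : ℕ => (1 - Real.cos (π/r)^2)⁻¹)
        Filter.atTop Filter.atTop := tendsto_inv_nhdsGT_zero.comp hden
    have hquot : Filter.Tendsto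
        (fun r : ℕ => (a^2 + b^2 + Real.cos (π/r)^2 + 2*a*b*Real.cos (π/r) - 1)
          * (1 - Real.cos (π/r)^2)⁻¹) Filter.atTop Filter.atTop :=
      Filter.Tendsto.pos_mul_atTop (by positivity) hnum hinv
    apply Filter.tendsto_atTop_mono' _ _ hquot
    filter_upwards [Filter.eventually_ge_atTop 2] with r hr
    rw [abs_D hp hq hr]
    rw [div_eq_mul_inv]
    apply mul_le_mul_of_nonneg_right (le_abs_self _)
    have h1 := cosn_lt_one hr
    have h2 := cosn_nonneg hr
    have : 0 < 1 - Real.cos (π/r)^2 := by nlinarith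
    positivity

end
end
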